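/- Let τ be a finite unordered rooted tree and let θ be any self-nested tree obtained from τ by a sequence of allowed inserting operations AI and AS (which preserve the heights of all pre-existing vertices). Then, identifying the height profile of the self-nested tree θ with its integer values, for every 1 ≤ h ≤ H(τ), ρ_θ(h, h-1) ≥ max ρ_τ(h, h-1), the maximum being taken over the components of the vector ρ_τ(h, h-1). -/

import Mathlib

/-- A finite rooted tree whose vertices form a finite subset `supp` of `ℕ`.
`par` maps each vertex to its parent; the root is a fixed point of `par`
(so it has no parent), and every vertex reaches the root by iterating `par`
(connectedness / acyclicity). -/
structure FTree where
  supp : Finset ℕ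
  root : ℕ
  root_mem : root ∈ supp
  par : ℕ → ℕ
  par_mem : ∀ v ∈ supp, par v ∈ supp
  par_root : par root = root
  reach : ∀ v ∈ supp, ∃ n, par^[n] v = root

namespace FTree

/-- Depth of a vertex: least number of parent steps needed to reach the root. -/
noncomputable def depth (t : FTree) (v : ℕ) : ℕ :=
  if h : v ∈ t.supp then Nat.find (t.reach v h) else 0

/-- `w` is a (weak) descendant of `v` in `t`. -/
def IsDesc (t : FTree) (v w : ℕ) : Prop :=
  w ∈ t.supp ∧ ∃ n ≤ t.depth w, t.par^[n] w = v

open Classical in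
/-- Vertex set of the subtree `t[v]` rooted at `v`. -/
noncomputable def desc (t : FTree) (v : ℕ) : Finset ℕ :=
  t.supp.filter (fun w => t.IsDesc v w)

/-- Height of the subtree `t[v]` rooted at `v`. -/
noncomputable def heightAt (t : FTree) (v : ℕ) : ℕ :=
  (t.desc v).sup (fun w => t.depth w) - t.depth v

/-- Height of the tree. -/
noncomputable def height (t : FTree) : ℕ := t.heightAt t.root

/-- The set of children of `v` in `t`. -/
def children (t : FTree) (v : ℕ) : Finset ℕ :=
  t.supp.filter (fun w => t.par w = v ∧ w ≠ t.root)

open Classical in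
/-- `γ_h(v)`: number of children of `v` whose subtree has height `h`. -/
noncomputable def gam (t : FTree) (v h : ℕ) : ℕ :=
  ((t.children v).filter (fun c => t.heightAt c = h)).card

/-- The subtree of `t` rooted at `v` is isomorphic (as an unordered rooted tree)
to the subtree of `s` rooted at `w`: a bijection between the vertex sets sending
root to root and commuting with the parent maps (i.e. mapping edges to edges). -/
def SubtreeIso (t : FTree) (v : ℕ) (s : FTree) (w : ℕ) : Prop :=
  ∃ φ : ℕ → ℕ, Set.BijOn φ (t.desc v : Set ℕ) (s.desc w : Set ℕ) ∧ φ v = w ∧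
    ∀ x ∈ t.desc v, x ≠ v → φ (t.par x) = s.par (φ x)

/-- Isomorphism of rooted trees. -/
def TreeIso (t s : FTree) : Prop := SubtreeIso t t.root s s.root

/-- A tree is self-nested if any two of its subtrees of the same height
are isomorphic. -/
def SelfNested (t : FTree) : Prop :=
  ∀ v ∈ t.supp, ∀ w ∈ t.supp, t.heightAt v = t.heightAt w → SubtreeIso t v t w

open Classical in
/-- Height profile entry `ρ_t(h1,h2)`: the multiset (family up to permutation) of
the values `γ_{h2}(v)` over all vertices `v` of `t` with `H(t[v]) = h1`. -/
noncomputable def profile (t : FTree) (h1 h2 : ℕ) : Multiset ℕ :=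
  (t.supp.filter (fun v => t.heightAt v = h1)).val.map (fun v => t.gam v h2)

/-- Number of vertices of `t`. -/
def numV (t : FTree) : ℕ := t.supp.card

/-- `a` is a (weak) ancestor of `b`. -/
def IsAnc (t : FTree) (a b : ℕ) : Prop := ∃ n, t.par^[n] b = a

/-- `a` is a proper ancestor of `b`. -/
def ProperAnc (t : FTree) (a b : ℕ) : Prop := a ≠ b ∧ t.IsAnc a b

/-- `l` is the least common ancestor of `a` and `b`. -/
def IsLCA (t : FTree) (a b l : ℕ) : Prop :=
  l ∈ t.supp ∧ t.IsAnc l a ∧ t.IsAnc l b ∧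
    ∀ m ∈ t.supp, t.IsAnc m a → t.IsAnc m b → t.IsAnc m l

/-- `φ`, restricted to the domain `D ⊆ t.supp`, is a constrained mapping in the
sense of Zhang from `t` to `s`: a one-to-one correspondence preserving the
ancestor order, satisfying moreover Zhang's condition on least common ancestors. -/
def ZhangMapping (t s : FTree) (D : Finset ℕ) (φ : ℕ → ℕ) : Prop :=
  D ⊆ t.supp ∧ (∀ x ∈ D, φ x ∈ s.supp) ∧ Set.InjOn φ (D : Set ℕ) ∧
  (∀ a ∈ D, ∀ b ∈ D, (t.ProperAnc a b ↔ s.ProperAnc (φ a) (φ b))) ∧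
  (∀ v1 ∈ D, ∀ v2 ∈ D, ∀ v3 ∈ D, ∀ l l',
    t.IsLCA v1 v2 l → s.IsLCA (φ v1) (φ v2) l' →
    (t.ProperAnc l v3 ↔ s.ProperAnc l' (φ v3)))

/-- Allowed inserting operation (AI): adding a new internal vertex `w` as a child of
`v`, making `w` the parent of the child `c` of `v`; allowed only if
`H(t[c]) + 1 < H(t[v])`. -/
def InsertAI (t θ : FTree) : Prop :=
  ∃ v c w, v ∈ t.supp ∧ c ∈ t.children v ∧ w ∉ t.supp ∧
    t.heightAt c + 1 < t.heightAt v ∧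
    θ.supp = insert w t.supp ∧ θ.root = t.root ∧
    θ.par w = v ∧ θ.par c = w ∧ ∀ x ∈ t.supp, x ≠ c → θ.par x = t.par x

/-- Allowed inserting operation (AS): attaching a tree `s` as a new child subtree of
`v`; allowed only if `H(s) + 1 ≤ H(t[v])`. -/
def InsertAS (t θ : FTree) : Prop :=
  ∃ (v : ℕ) (s : FTree), v ∈ t.supp ∧ Disjoint s.supp t.supp ∧
    s.height + 1 ≤ t.heightAt v ∧
    θ.supp = t.supp ∪ s.supp ∧ θ.root = t.root ∧ θ.par s.root = v ∧
    (∀ x ∈ t.supp, θ.par x = t.par x) ∧ (∀ x ∈ s.supp, x ≠ s.root → θ.par x = s.par x)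

/-- One allowed inserting operation. -/
def InsertStep (t θ : FTree) : Prop := InsertAI t θ ∨ InsertAS t θ

/-- Allowed deleting operation (DI): deleting an internal vertex `v`, child of `u`,
having a unique child `c` (which becomes a child of `u`); allowed only if `u` has
another child `v'` with `H(t[v']) ≥ H(t[v])`. -/
def DeleteDI (t θ : FTree) : Prop :=
  ∃ u v c, v ∈ t.children u ∧ t.children v = {c} ∧
    (∃ v' ∈ t.children u, v' ≠ v ∧ t.heightAt v ≤ t.heightAt v') ∧
    θ.supp = t.supp.erase v ∧ θ.root = t.root ∧ θ.par c = u ∧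
    ∀ x ∈ t.supp, x ≠ v → x ≠ c → θ.par x = t.par x

/-- Allowed deleting operation (DS): deleting the whole subtree rooted at a child `w`
of `v`; allowed only if `v` has another child `w'` with `H(t[w']) + 1 = H(t[v])`. -/
def DeleteDS (t θ : FTree) : Prop :=
  ∃ v w, w ∈ t.children v ∧
    (∃ w' ∈ t.children v, w' ≠ w ∧ t.heightAt w' + 1 = t.heightAt v) ∧
    θ.supp = t.supp \ t.desc w ∧ θ.root = t.root ∧
    ∀ x ∈ θ.supp, θ.par x = t.par x

/-- One allowed deleting operation. -/
def DeleteStep (t θ : FTree) : Prop := DeleteDI t θ ∨ DeleteDS t θ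

/-- A general single-vertex inserting operation: a new vertex `w` is added as a child
of `v`, and the vertices of a subset `C` of the children of `v` become children of `w`. -/
def GeneralInsert (t θ : FTree) : Prop :=
  ∃ (v w : ℕ) (C : Finset ℕ), v ∈ t.supp ∧ w ∉ t.supp ∧ C ⊆ t.children v ∧
    θ.supp = insert w t.supp ∧ θ.root = t.root ∧ θ.par w = v ∧
    (∀ x ∈ C, θ.par x = w) ∧ ∀ x ∈ t.supp, x ∉ C → θ.par x = t.par x

/-- Cost of a constrained mapping with domain `D`: vertices of `t` not in the domain
are deleted, vertices of `s` not in the image are inserted (unit costs). -/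
def mappingCost (t s : FTree) (D : Finset ℕ) (φ : ℕ → ℕ) : ℕ :=
  (t.numV - D.card) + (s.numV - (D.image φ).card)

/-- Zhang's constrained edit distance between unordered trees: the minimal cost
associated with a constrained mapping between `t` and `s`. -/
noncomputable def DZ (t s : FTree) : ℕ :=
  sInf { c | ∃ (D : Finset ℕ) (φ : ℕ → ℕ), ZhangMapping t s D φ ∧ c = mappingCost t s D φ }

section Basics

variable (t : FTree)

lemma iter_mem {v : ℕ} (hv : v ∈ t.supp) (n : ℕ) : t.par^[n] v ∈ t.supp := by
  induction n with
  | zero => simpa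
  | succ n ih => rw [Function.iterate_succ_apply']; exact t.par_mem _ ih

lemma depth_spec {v : ℕ} (hv : v ∈ t.supp) : t.par^[t.depth v] v = t.root := by
  rw [depth, dif_pos hv]; exact Nat.find_spec (t.reach v hv)

lemma depth_min {v : ℕ} (hv : v ∈ t.supp) {n : ℕ} (hn : n < t.depth v) :
    t.par^[n] v ≠ t.root := by
  rw [depth, dif_pos hv] at hn; exact Nat.find_min (t.reach v hv) hn

lemma depth_eq {v : ℕ} (hv : v ∈ t.supp) {k : ℕ}
    (h1 : t.par^[k] v = t.root) (h2 : ∀ n < k, t.par^[n] v ≠ t.root) : t.depth v = k := by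
  rw [depth, dif_pos hv]
  exact le_antisymm (Nat.find_le h1) (le_of_not_gt fun h => h2 _ h (Nat.find_spec (t.reach v hv)))

lemma depth_root : t.depth t.root = 0 :=
  t.depth_eq t.root_mem (by simp) (by simp)

lemma eq_root_of_depth_zero {v : ℕ} (hv : v ∈ t.supp) (h : t.depth v = 0) : v = t.root := by
  have := t.depth_spec hv; rw [h] at this; simpa using this

lemma ne_root_of_depth_pos {v : ℕ} (h : 0 < t.depth v) : v ≠ t.root := by
  intro e; rw [e, t.depth_root] at h; omega

lemma depth_succ {v : ℕ} (hv : v ∈ t.supp) (hr : v ≠ t.root) :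
    t.depth v = t.depth (t.par v) + 1 := by
  have hd : t.depth v ≠ 0 := fun h => hr (t.eq_root_of_depth_zero hv h)
  obtain ⟨d, hdd⟩ : ∃ d, t.depth v = d + 1 := ⟨t.depth v - 1, by omega⟩
  have h1 : t.par^[d] (t.par v) = t.root := by
    have := t.depth_spec hv
    rw [hdd, Function.iterate_succ_apply] at this
    exact this
  have h2 : ∀ n < d, t.par^[n] (t.par v) ≠ t.root := fun n hn => by
    have := t.depth_min hv (show n + 1 < t.depth v by omega)
    rwa [Function.iterate_succ_apply] at this
  rw [t.depth_eq (t.par_mem v hv) h1 h2, hdd]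

lemma depth_iter {v : ℕ} (hv : v ∈ t.supp) {n : ℕ} (hn : n ≤ t.depth v) :
    t.depth (t.par^[n] v) + n = t.depth v := by
  induction n with
  | zero => simp
  | succ n ih =>
    have ih' := ih (by omega)
    have hne : t.par^[n] v ≠ t.root := t.ne_root_of_depth_pos (by omega)
    rw [Function.iterate_succ_apply', ← ih', t.depth_succ (t.iter_mem hv n) hne]
    omega

lemma mem_desc {x v : ℕ} : x ∈ t.desc v ↔ t.IsDesc v x := by
  simp only [desc, Finset.mem_filter]
  exact ⟨fun h => h.2, fun h => ⟨h.1, h⟩⟩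

lemma desc_subset_supp {v : ℕ} : t.desc v ⊆ t.supp := fun x hx => (t.mem_desc.1 hx).1

lemma desc_self {v : ℕ} (hv : v ∈ t.supp) : v ∈ t.desc v :=
  t.mem_desc.2 ⟨hv, 0, by omega, rfl⟩

lemma desc_spec {x v : ℕ} (h : x ∈ t.desc v) :
    x ∈ t.supp ∧ t.depth v ≤ t.depth x ∧ t.par^[t.depth x - t.depth v] x = v := by
  obtain ⟨hx, n, hn, hp⟩ := t.mem_desc.1 h
  have := t.depth_iter hx hn
  rw [hp] at this
  refine ⟨hx, by omega, ?_⟩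
  have : t.depth x - t.depth v = n := by omega
  rw [this, hp]

lemma eq_of_desc_depth {x v : ℕ} (h : x ∈ t.desc v) (hd : t.depth x = t.depth v) : x = v := by
  have h0 := (t.desc_spec h).2.2
  rw [hd, Nat.sub_self] at h0
  simp only [Function.iterate_zero_apply] at h0
  exact h0

lemma depth_lt_of_desc {x v : ℕ} (h : x ∈ t.desc v) (hne : x ≠ v) : t.depth v < t.depth x := by
  rcases lt_or_eq_of_le (t.desc_spec h).2.1 with h' | h'
  · exact h'
  · exact absurd (t.eq_of_desc_depth h h'.symm) hne

lemma ne_root_of_desc {x v : ℕ} (h : x ∈ t.desc v) (hne : x ≠ v) : x ≠ t.root :=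
  t.ne_root_of_depth_pos (by have := t.depth_lt_of_desc h hne; omega)

lemma par_mem_desc {x v : ℕ} (h : x ∈ t.desc v) (hne : x ≠ v) : t.par x ∈ t.desc v := by
  obtain ⟨hx, hle, hp⟩ := t.desc_spec h
  have hlt := t.depth_lt_of_desc h hne
  have hroot : x ≠ t.root := t.ne_root_of_desc h hne
  have hdp : t.depth x = t.depth (t.par x) + 1 := t.depth_succ hx hroot
  have key : t.par^[t.depth x - t.depth v - 1 + 1] x = v := by
    have e : t.depth x - t.depth v - 1 + 1 = t.depth x - t.depth v := by omega
    rw [e]; exact hp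
  refine t.mem_desc.2 ⟨t.par_mem x hx, t.depth x - t.depth v - 1, by omega, ?_⟩
  rw [← Function.iterate_succ_apply]
  exact key

lemma child_mem_desc {x v : ℕ} (hx : x ∈ t.supp) (hroot : x ≠ t.root)
    (h : t.par x ∈ t.desc v) : x ∈ t.desc v := by
  obtain ⟨hpx, hle, hp⟩ := t.desc_spec h
  have hdp : t.depth x = t.depth (t.par x) + 1 := t.depth_succ hx hroot
  refine t.mem_desc.2 ⟨hx, t.depth (t.par x) - t.depth v + 1, by omega, ?_⟩
  rw [Function.iterate_succ_apply]
  exact hp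

lemma desc_trans {x y v : ℕ} (hxy : x ∈ t.desc y) (hyv : y ∈ t.desc v) : x ∈ t.desc v := by
  obtain ⟨hx, h1, hp1⟩ := t.desc_spec hxy
  obtain ⟨hy, h2, hp2⟩ := t.desc_spec hyv
  refine t.mem_desc.2 ⟨hx, (t.depth y - t.depth v) + (t.depth x - t.depth y), by omega, ?_⟩
  rw [Function.iterate_add_apply, hp1, hp2]

lemma desc_comparable {x u c : ℕ} (hu : x ∈ t.desc u) (hc : x ∈ t.desc c) :
    c ∈ t.desc u ∨ u ∈ t.desc c := by
  obtain ⟨hx, h1, hp1⟩ := t.desc_spec hu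
  obtain ⟨-, h2, hp2⟩ := t.desc_spec hc
  rcases le_total (t.depth u) (t.depth c) with h | h
  · left
    refine t.mem_desc.2 ⟨hp2 ▸ t.iter_mem hx _, t.depth c - t.depth u, Nat.sub_le _ _, ?_⟩
    have e : t.depth x - t.depth u = (t.depth u - t.depth c) + ((t.depth c - t.depth u) + (t.depth x - t.depth c)) := by omega
    rw [e] at hp1
    simp only [Nat.sub_eq_zero_of_le h, Nat.zero_add] at hp1
    rw [Function.iterate_add_apply, hp2] at hp1
    exact hp1
  · right
    refine t.mem_desc.2 ⟨hp1 ▸ t.iter_mem hx _, t.depth u - t.depth c, Nat.sub_le _ _, ?_⟩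
    have e : t.depth x - t.depth c = (t.depth u - t.depth c) + (t.depth x - t.depth u) := by omega
    rw [e, Function.iterate_add_apply, hp1] at hp2
    exact hp2

lemma heightAt_add {v : ℕ} (hv : v ∈ t.supp) :
    t.depth v + t.heightAt v = (t.desc v).sup (fun w => t.depth w) := by
  have h : t.depth v ≤ (t.desc v).sup (fun w => t.depth w) :=
    Finset.le_sup (f := fun w => t.depth w) (t.desc_self hv)
  simp only [heightAt]
  omega

lemma mem_children {x v : ℕ} : x ∈ t.children v ↔ x ∈ t.supp ∧ t.par x = v ∧ x ≠ t.root := by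
  simp [children]

lemma child_ne {x v : ℕ} (h : x ∈ t.children v) : x ≠ v := by
  obtain ⟨hx, hp, hr⟩ := t.mem_children.1 h
  intro e
  have := t.depth_succ hx hr
  rw [hp, ← e] at this
  omega

lemma children_subset_desc {v : ℕ} (hv : v ∈ t.supp) : t.children v ⊆ t.desc v := by
  intro x hx
  obtain ⟨hxs, hp, hr⟩ := t.mem_children.1 hx
  refine t.child_mem_desc hxs hr ?_
  rw [hp]
  exact t.desc_self hv

end Basics

lemma depth_le_height (t : FTree) {y : ℕ} (hy : y ∈ t.supp) : t.depth y ≤ t.height := by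
  have h1 := t.heightAt_add t.root_mem
  have h2 : y ∈ t.desc t.root := t.mem_desc.2 ⟨hy, t.depth y, le_rfl, t.depth_spec hy⟩
  have h3 : t.depth y ≤ (t.desc t.root).sup (fun w => t.depth w) :=
    Finset.le_sup (f := fun w => t.depth w) h2
  have h4 := t.depth_root
  rw [height]
  omega

section Iso

variable {t s : FTree} {v w : ℕ} {φ : ℕ → ℕ}

lemma iso_depth (hv : v ∈ t.supp) (hw : w ∈ s.supp)
    (hbij : Set.BijOn φ (t.desc v : Set ℕ) (s.desc w : Set ℕ)) (hroot : φ v = w)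
    (hcomm : ∀ x ∈ t.desc v, x ≠ v → φ (t.par x) = s.par (φ x)) :
    ∀ x ∈ t.desc v, s.depth (φ x) + t.depth v = t.depth x + s.depth w := by
  suffices h : ∀ n, ∀ x, t.depth x ≤ n → x ∈ t.desc v →
      s.depth (φ x) + t.depth v = t.depth x + s.depth w by
    exact fun x hx => h (t.depth x) x le_rfl hx
  intro n
  induction n with
  | zero =>
    intro x hxd hx
    have hdle := (t.desc_spec hx).2.1
    have hxv : x = v := t.eq_of_desc_depth hx (by omega)
    subst hxv
    rw [hroot]
    omega
  | succ n ih =>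
    intro x hxd hx
    by_cases hxv : x = v
    · subst hxv; rw [hroot]; omega
    · have hpar := t.par_mem_desc hx hxv
      have hxne : x ≠ t.root := t.ne_root_of_desc hx hxv
      have hd : t.depth x = t.depth (t.par x) + 1 :=
        t.depth_succ (t.desc_subset_supp hx) hxne
      have ihp := ih (t.par x) (by omega) hpar
      have hc := hcomm x hx hxv
      have hφx : φ x ∈ s.desc w := hbij.mapsTo hx
      have hφne : φ x ≠ w := by
        intro e
        exact hxv (hbij.injOn (Finset.mem_coe.2 hx) (Finset.mem_coe.2 (t.desc_self hv))
          (by rw [e, hroot]))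
      have hφroot : φ x ≠ s.root := s.ne_root_of_desc hφx hφne
      have hds : s.depth (φ x) = s.depth (s.par (φ x)) + 1 :=
        s.depth_succ (s.desc_subset_supp hφx) hφroot
      rw [← hc] at hds
      omega

lemma iso_desc_image (hv : v ∈ t.supp) (hw : w ∈ s.supp)
    (hbij : Set.BijOn φ (t.desc v : Set ℕ) (s.desc w : Set ℕ)) (hroot : φ v = w)
    (hcomm : ∀ x ∈ t.desc v, x ≠ v → φ (t.par x) = s.par (φ x)) :
    ∀ x ∈ t.desc v, ∀ y ∈ t.desc x, φ y ∈ s.desc (φ x) := by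
  intro x hx
  suffices h : ∀ n, ∀ y, t.depth y ≤ n → y ∈ t.desc x → φ y ∈ s.desc (φ x) by
    exact fun y hy => h (t.depth y) y le_rfl hy
  have hxv' : x ∈ t.supp := t.desc_subset_supp hx
  have hφxd : φ x ∈ s.desc w := hbij.mapsTo hx
  have hφxs : φ x ∈ s.supp := s.desc_subset_supp hφxd
  intro n
  induction n with
  | zero =>
    intro y hyd hy
    have hdle := (t.desc_spec hy).2.1
    have : y = x := t.eq_of_desc_depth hy (by omega)
    subst this
    exact s.desc_self hφxs
  | succ n ih =>
    intro y hyd hy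
    by_cases hyx : y = x
    · subst hyx; exact s.desc_self hφxs
    · have hyv : y ∈ t.desc v := t.desc_trans hy hx
      have hdx := t.depth_lt_of_desc hy hyx
      have hdxv := (t.desc_spec hx).2.1
      have hynev : y ≠ v := by
        intro e; subst e
        have := (t.desc_spec hy).2.1
        omega
      have hpar := t.par_mem_desc hy hyx
      have hyroot : y ≠ t.root := t.ne_root_of_desc hy hyx
      have hd : t.depth y = t.depth (t.par y) + 1 :=
        t.depth_succ (t.desc_subset_supp hy) hyroot
      have ihp := ih (t.par y) (by omega) hpar
      have hc := hcomm y hyv hynev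
      rw [hc] at ihp
      have hφy : φ y ∈ s.desc w := hbij.mapsTo hyv
      have hφyne : φ y ≠ w := by
        intro e
        exact hynev (hbij.injOn (Finset.mem_coe.2 hyv) (Finset.mem_coe.2 (t.desc_self hv))
          (by rw [e, hroot]))
      exact s.child_mem_desc (s.desc_subset_supp hφy) (s.ne_root_of_desc hφy hφyne) ihp

lemma iso_desc_preimage (hv : v ∈ t.supp) (hw : w ∈ s.supp)
    (hbij : Set.BijOn φ (t.desc v : Set ℕ) (s.desc w : Set ℕ)) (hroot : φ v = w)
    (hcomm : ∀ x ∈ t.desc v, x ≠ v → φ (t.par x) = s.par (φ x)) :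
    ∀ x ∈ t.desc v, ∀ y ∈ t.desc v, φ y ∈ s.desc (φ x) → y ∈ t.desc x := by
  intro x hx
  suffices h : ∀ n, ∀ y, t.depth y ≤ n → y ∈ t.desc v → φ y ∈ s.desc (φ x) → y ∈ t.desc x by
    exact fun y hy => h (t.depth y) y le_rfl hy
  have hxv' : x ∈ t.supp := t.desc_subset_supp hx
  have hφxd : φ x ∈ s.desc w := hbij.mapsTo hx
  intro n
  induction n with
  | zero =>
    intro y hyd hy hφ
    have hdle := (t.desc_spec hy).2.1
    have hyv : y = v := t.eq_of_desc_depth hy (by omega)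
    rw [hyv, hroot] at hφ
    have h1 := (s.desc_spec hφ).2.1
    have h2 := (s.desc_spec hφxd).2.1
    have hfx : φ x = w := s.eq_of_desc_depth hφxd (by omega)
    have hxv : x = v := hbij.injOn (Finset.mem_coe.2 hx) (Finset.mem_coe.2 (t.desc_self hv))
      (by rw [hfx, hroot])
    rw [hyv, hxv]
    exact t.desc_self hv
  | succ n ih =>
    intro y hyd hy hφ
    by_cases hyx : y = x
    · subst hyx; exact t.desc_self (t.desc_subset_supp hy)
    · have hφyne : φ y ≠ φ x := by
        intro e
        exact hyx (hbij.injOn (Finset.mem_coe.2 hy) (Finset.mem_coe.2 hx) e)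
      by_cases hyv : y = v
      · subst hyv
        rw [hroot] at hφ
        have h1 := (s.desc_spec hφ).2.1
        have h2 := (s.desc_spec hφxd).2.1
        have he : φ x = w := (s.eq_of_desc_depth hφxd (by omega))
        rw [hroot] at hφyne
        exact absurd he.symm hφyne
      · have hpar := t.par_mem_desc hy hyv
        have hyroot : y ≠ t.root := t.ne_root_of_desc hy hyv
        have hd : t.depth y = t.depth (t.par y) + 1 :=
          t.depth_succ (t.desc_subset_supp hy) hyroot
        have hc := hcomm y hy hyv
        have hφpar : φ (t.par y) ∈ s.desc (φ x) := by
          rw [hc]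
          exact s.par_mem_desc hφ hφyne
        have ihp := ih (t.par y) (by omega) hpar hφpar
        exact t.child_mem_desc (t.desc_subset_supp hy) hyroot ihp

lemma iso_desc_eq (hv : v ∈ t.supp) (hw : w ∈ s.supp)
    (hbij : Set.BijOn φ (t.desc v : Set ℕ) (s.desc w : Set ℕ)) (hroot : φ v = w)
    (hcomm : ∀ x ∈ t.desc v, x ≠ v → φ (t.par x) = s.par (φ x)) :
    ∀ x ∈ t.desc v, s.desc (φ x) = (t.desc x).image φ := by
  intro x hx
  have hφxd : φ x ∈ s.desc w := hbij.mapsTo hx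
  ext z
  constructor
  · intro hz
    have hzw : z ∈ s.desc w := s.desc_trans hz hφxd
    obtain ⟨y, hy, hyz⟩ := hbij.surjOn (Finset.mem_coe.2 hzw)
    have hy' : y ∈ t.desc v := Finset.mem_coe.1 hy
    rw [← hyz] at hz
    have := iso_desc_preimage hv hw hbij hroot hcomm x hx y hy' hz
    exact Finset.mem_image.2 ⟨y, this, hyz⟩
  · intro hz
    obtain ⟨y, hy, hyz⟩ := Finset.mem_image.1 hz
    rw [← hyz]
    exact iso_desc_image hv hw hbij hroot hcomm x hx y hy

lemma iso_heightAt (hv : v ∈ t.supp) (hw : w ∈ s.supp)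
    (hbij : Set.BijOn φ (t.desc v : Set ℕ) (s.desc w : Set ℕ)) (hroot : φ v = w)
    (hcomm : ∀ x ∈ t.desc v, x ≠ v → φ (t.par x) = s.par (φ x)) :
    ∀ x ∈ t.desc v, s.heightAt (φ x) = t.heightAt x := by
  intro x hx
  have hxs : x ∈ t.supp := t.desc_subset_supp hx
  have hφxd : φ x ∈ s.desc w := hbij.mapsTo hx
  have hφxs : φ x ∈ s.supp := s.desc_subset_supp hφxd
  have hdeq := iso_desc_eq hv hw hbij hroot hcomm x hx
  -- sup attained on both sides
  obtain ⟨z1, hz1, hz1e⟩ := Finset.exists_mem_eq_sup (s.desc (φ x))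
    ⟨φ x, s.desc_self hφxs⟩ (fun y => s.depth y)
  obtain ⟨y2, hy2, hy2e⟩ := Finset.exists_mem_eq_sup (t.desc x)
    ⟨x, t.desc_self hxs⟩ (fun y => t.depth y)
  obtain ⟨y1, hy1, hy1z⟩ := Finset.mem_image.1 (hdeq ▸ hz1)
  have hy1v : y1 ∈ t.desc v := t.desc_trans hy1 hx
  have hy2v : y2 ∈ t.desc v := t.desc_trans hy2 hx
  have e1 := iso_depth hv hw hbij hroot hcomm y1 hy1v
  have e2 := iso_depth hv hw hbij hroot hcomm y2 hy2v
  have ex := iso_depth hv hw hbij hroot hcomm x hx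
  rw [hy1z] at e1
  have hφy2 : φ y2 ∈ s.desc (φ x) := iso_desc_image hv hw hbij hroot hcomm x hx y2 hy2
  have hle1 : s.depth (φ y2) ≤ (s.desc (φ x)).sup (fun y => s.depth y) :=
    Finset.le_sup (f := fun y => s.depth y) hφy2
  have hle2 : t.depth y1 ≤ (t.desc x).sup (fun y => t.depth y) :=
    Finset.le_sup (f := fun y => t.depth y) hy1
  have e3 := iso_depth hv hw hbij hroot hcomm y2 hy2v
  have hh1 := s.heightAt_add hφxs
  have hh2 := t.heightAt_add hxs
  omega

lemma iso_gam_le {u w0 : ℕ} (hu : u ∈ t.supp) (hw0 : w0 ∈ t.supp)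
    (hiso : t.SubtreeIso u t w0) (k : ℕ) : t.gam u k ≤ t.gam w0 k := by
  obtain ⟨φ, hbij, hroot, hcomm⟩ := hiso
  simp only [gam]
  apply Finset.card_le_card_of_injOn φ
  · intro x hx
    simp only [Finset.mem_coe, Finset.mem_filter] at hx ⊢
    obtain ⟨hxc, hxh⟩ := hx
    obtain ⟨hxs, hxp, hxr⟩ := t.mem_children.1 hxc
    have hxd : x ∈ t.desc u := t.children_subset_desc hu hxc
    have hxu : x ≠ u := t.child_ne hxc
    have hφxd : φ x ∈ t.desc w0 := hbij.mapsTo hxd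
    have hφxne : φ x ≠ w0 := by
      intro e
      exact hxu (hbij.injOn (Finset.mem_coe.2 hxd) (Finset.mem_coe.2 (t.desc_self hu))
        (by rw [e, hroot]))
    have hpar : t.par (φ x) = w0 := by
      rw [← hcomm x hxd hxu, hxp, hroot]
    refine ⟨t.mem_children.2 ⟨t.desc_subset_supp hφxd, hpar, t.ne_root_of_desc hφxd hφxne⟩, ?_⟩
    rw [iso_heightAt hu hw0 hbij hroot hcomm x hxd, hxh]
  · intro a ha b hb hab
    have ha' : a ∈ t.desc u := t.children_subset_desc hu (Finset.mem_filter.1 ha).1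
    have hb' : b ∈ t.desc u := t.children_subset_desc hu (Finset.mem_filter.1 hb).1
    exact hbij.injOn (Finset.mem_coe.2 ha') (Finset.mem_coe.2 hb') hab

lemma mem_profile {t : FTree} {h1 h2 x : ℕ} :
    x ∈ t.profile h1 h2 ↔ ∃ v ∈ t.supp, t.heightAt v = h1 ∧ t.gam v h2 = x := by
  simp only [profile, Multiset.mem_map, Finset.mem_val, Finset.mem_filter]
  constructor
  · rintro ⟨v, ⟨hv, hh⟩, he⟩
    exact ⟨v, hv, hh, he⟩
  · rintro ⟨v, hv, hh, he⟩
    exact ⟨v, ⟨hv, hh⟩, he⟩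

end Iso

section AI

/-- Context of an AI insertion. -/
def AICtx (t θ : FTree) (v c w : ℕ) : Prop :=
  v ∈ t.supp ∧ c ∈ t.children v ∧ w ∉ t.supp ∧
    t.heightAt c + 1 < t.heightAt v ∧
    θ.supp = insert w t.supp ∧ θ.root = t.root ∧
    θ.par w = v ∧ θ.par c = w ∧ ∀ x ∈ t.supp, x ≠ c → θ.par x = t.par x

variable {t θ : FTree} {v c w : ℕ}

lemma AICtx.cs (H : AICtx t θ v c w) : c ∈ t.supp := (t.mem_children.1 H.2.1).1
lemma AICtx.cpar (H : AICtx t θ v c w) : t.par c = v := (t.mem_children.1 H.2.1).2.1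
lemma AICtx.croot (H : AICtx t θ v c w) : c ≠ t.root := (t.mem_children.1 H.2.1).2.2
lemma AICtx.dc (H : AICtx t θ v c w) : t.depth c = t.depth v + 1 := by
  rw [t.depth_succ H.cs H.croot, H.cpar]
lemma AICtx.vndesc (H : AICtx t θ v c w) : v ∉ t.desc c := by
  intro h
  have := (t.desc_spec h).2.1
  have := H.dc
  omega
lemma AICtx.cdescv (H : AICtx t θ v c w) : c ∈ t.desc v := by
  refine t.child_mem_desc H.cs H.croot ?_
  rw [H.cpar]; exact t.desc_self H.1
lemma AICtx.suppsub (H : AICtx t θ v c w) {x : ℕ} (hx : x ∈ t.supp) : x ∈ θ.supp := by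
  rw [H.2.2.2.2.1]; exact Finset.mem_insert_of_mem hx
lemma AICtx.wmem (H : AICtx t θ v c w) : w ∈ θ.supp := by
  rw [H.2.2.2.2.1]; exact Finset.mem_insert_self _ _

lemma AICtx.chain_out (H : AICtx t θ v c w) {x : ℕ} (hx : x ∈ t.supp) (hxc : x ∉ t.desc c) :
    ∀ n ≤ t.depth x, θ.par^[n] x = t.par^[n] x := by
  intro n hn
  induction n with
  | zero => simp
  | succ n ih =>
    rw [Function.iterate_succ_apply', Function.iterate_succ_apply', ih (by omega)]
    have hmem : t.par^[n] x ∈ t.supp := t.iter_mem hx n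
    have hne : t.par^[n] x ≠ c := by
      intro e
      exact hxc (t.mem_desc.2 ⟨hx, n, by omega, e⟩)
    exact H.2.2.2.2.2.2.2.2 _ hmem hne

lemma AICtx.depth_out (H : AICtx t θ v c w) {x : ℕ} (hx : x ∈ t.supp) (hxc : x ∉ t.desc c) :
    θ.depth x = t.depth x := by
  refine θ.depth_eq (H.suppsub hx) ?_ ?_
  · rw [H.chain_out hx hxc _ le_rfl, H.2.2.2.2.2.1]
    exact t.depth_spec hx
  · intro n hn
    rw [H.chain_out hx hxc _ (by omega), H.2.2.2.2.2.1]
    exact t.depth_min hx hn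

lemma AICtx.depth_w (H : AICtx t θ v c w) : θ.depth w = t.depth v + 1 := by
  have key : ∀ m ≤ t.depth v, θ.par^[m + 1] w = t.par^[m] v := by
    intro m hm
    rw [Function.iterate_succ_apply, H.2.2.2.2.2.2.1]
    exact H.chain_out H.1 H.vndesc m hm
  refine θ.depth_eq H.wmem ?_ ?_
  · rw [key _ le_rfl, H.2.2.2.2.2.1]
    exact t.depth_spec H.1
  · intro n hn
    rcases n with - | m
    · simp only [Function.iterate_zero_apply]
      rw [H.2.2.2.2.2.1]
      intro e
      exact H.2.2.1 (e ▸ t.root_mem)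
    · rw [key m (by omega), H.2.2.2.2.2.1]
      exact t.depth_min H.1 (by omega)

lemma AICtx.chain_in (H : AICtx t θ v c w) {x : ℕ} (hx : x ∈ t.desc c) :
    ∀ n ≤ t.depth x - t.depth c, θ.par^[n] x = t.par^[n] x := by
  obtain ⟨hxs, hle, hp⟩ := t.desc_spec hx
  intro n hn
  induction n with
  | zero => simp
  | succ n ih =>
    rw [Function.iterate_succ_apply', Function.iterate_succ_apply', ih (by omega)]
    have hmem : t.par^[n] x ∈ t.supp := t.iter_mem hxs n
    have hne : t.par^[n] x ≠ c := by
      intro e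
      have := t.depth_iter hxs (show n ≤ t.depth x by omega)
      rw [e] at this
      omega
    exact H.2.2.2.2.2.2.2.2 _ hmem hne

lemma AICtx.chain_in_c (H : AICtx t θ v c w) {x : ℕ} (hx : x ∈ t.desc c) :
    θ.par^[t.depth x - t.depth c] x = c := by
  rw [H.chain_in hx _ le_rfl]
  exact (t.desc_spec hx).2.2

lemma AICtx.chain_in_w (H : AICtx t θ v c w) {x : ℕ} (hx : x ∈ t.desc c) :
    θ.par^[t.depth x - t.depth c + 1] x = w := by
  rw [Function.iterate_succ_apply', H.chain_in_c hx]
  exact H.2.2.2.2.2.2.2.1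

lemma AICtx.chain_in_tail (H : AICtx t θ v c w) {x : ℕ} (hx : x ∈ t.desc c) :
    ∀ m ≤ t.depth v, θ.par^[t.depth x - t.depth c + 2 + m] x = t.par^[m] v := by
  intro m hm
  have e : t.depth x - t.depth c + 2 + m = (m + 1) + (t.depth x - t.depth c + 1) := by omega
  rw [e, Function.iterate_add_apply, H.chain_in_w hx, Function.iterate_succ_apply,
    H.2.2.2.2.2.2.1]
  exact H.chain_out H.1 H.vndesc m hm

lemma AICtx.depth_in (H : AICtx t θ v c w) {x : ℕ} (hx : x ∈ t.desc c) :
    θ.depth x = t.depth x + 1 := by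
  obtain ⟨hxs, hle, hp⟩ := t.desc_spec hx
  have hdc := H.dc
  refine θ.depth_eq (H.suppsub hxs) ?_ ?_
  · have e : t.depth x + 1 = t.depth x - t.depth c + 2 + t.depth v := by omega
    rw [e, H.chain_in_tail hx _ le_rfl, H.2.2.2.2.2.1]
    exact t.depth_spec H.1
  · intro n hn
    rcases le_or_gt n (t.depth x - t.depth c) with h | h
    · rw [H.chain_in hx _ h, H.2.2.2.2.2.1]
      exact t.depth_min hxs (by omega)
    · rcases eq_or_lt_of_le (show t.depth x - t.depth c + 1 ≤ n from h) with h' | h'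
      · rw [← h', H.chain_in_w hx, H.2.2.2.2.2.1]
        intro e
        exact H.2.2.1 (e ▸ t.root_mem)
      · have e : n = t.depth x - t.depth c + 2 + (n - (t.depth x - t.depth c) - 2) := by omega
        rw [e, H.chain_in_tail hx _ (by omega), H.2.2.2.2.2.1]
        exact t.depth_min H.1 (by omega)

lemma AICtx.desc_iff (H : AICtx t θ v c w) {u x : ℕ} (hu : u ∈ t.supp) (hx : x ∈ t.supp) :
    x ∈ θ.desc u ↔ x ∈ t.desc u := by
  have hdc := H.dc
  constructor
  · intro h
    obtain ⟨hxs, n, hn, hp⟩ := θ.mem_desc.1 h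
    by_cases hxc : x ∈ t.desc c
    · obtain ⟨-, hle, -⟩ := t.desc_spec hxc
      have hdx : θ.depth x = t.depth x + 1 := H.depth_in hxc
      rcases le_or_gt n (t.depth x - t.depth c) with hcase | hcase
      · rw [H.chain_in hxc _ hcase] at hp
        exact t.mem_desc.2 ⟨hx, n, by omega, hp⟩
      · rcases eq_or_lt_of_le (show t.depth x - t.depth c + 1 ≤ n from hcase) with h' | h'
        · rw [← h', H.chain_in_w hxc] at hp
          exact absurd (hp ▸ hu) H.2.2.1
        · have e : n = t.depth x - t.depth c + 2 + (n - (t.depth x - t.depth c) - 2) := by omega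
          rw [e, H.chain_in_tail hxc _ (by omega)] at hp
          have huv : v ∈ t.desc u := t.mem_desc.2 ⟨H.1, _, by omega, hp⟩
          exact t.desc_trans (t.desc_trans hxc H.cdescv) huv
    · rw [H.chain_out hx hxc n (by rw [H.depth_out hx hxc] at hn; omega)] at hp
      refine t.mem_desc.2 ⟨hx, n, ?_, hp⟩
      rw [H.depth_out hx hxc] at hn
      exact hn
  · intro h
    obtain ⟨hxs, hle, hp⟩ := t.desc_spec h
    by_cases hxc : x ∈ t.desc c
    · obtain ⟨-, hlec, hpc⟩ := t.desc_spec hxc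
      have hdx : θ.depth x = t.depth x + 1 := H.depth_in hxc
      set n := t.depth x - t.depth u with hndef
      rcases le_or_gt n (t.depth x - t.depth c) with hcase | hcase
      · refine θ.mem_desc.2 ⟨H.suppsub hx, n, by omega, ?_⟩
        rw [H.chain_in hxc _ hcase]
        exact hp
      · -- u is a weak ancestor of v
        have em : n = (n - (t.depth x - t.depth c) - 1) + 1 + (t.depth x - t.depth c) := by omega
        set m := n - (t.depth x - t.depth c) - 1 with hmdef
        have hm : m ≤ t.depth v := by omega
        have hpv : t.par^[m] v = u := by
          have hidx : n = m + (1 + (t.depth x - t.depth c)) := by omega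
          have : t.par^[n] x = t.par^[m] (t.par^[1] (t.par^[t.depth x - t.depth c] x)) := by
            rw [hidx, Function.iterate_add_apply, Function.iterate_add_apply]
          rw [this] at hp
          rw [hpc] at hp
          simp only [Function.iterate_one] at hp
          rw [H.cpar] at hp
          exact hp
        refine θ.mem_desc.2 ⟨H.suppsub hx, t.depth x - t.depth c + 2 + m, by omega, ?_⟩
        rw [H.chain_in_tail hxc _ hm]
        exact hpv
    · refine θ.mem_desc.2 ⟨H.suppsub hx, t.depth x - t.depth u, ?_, ?_⟩
      · rw [H.depth_out hx hxc]; omega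
      · rw [H.chain_out hx hxc _ (by omega)]
        exact hp

lemma AICtx.desc_w_iff (H : AICtx t θ v c w) {u : ℕ} (hu : u ∈ t.supp) :
    w ∈ θ.desc u ↔ v ∈ t.desc u := by
  have hdw := H.depth_w
  constructor
  · intro h
    obtain ⟨-, n, hn, hp⟩ := θ.mem_desc.1 h
    rcases n with - | m
    · simp only [Function.iterate_zero_apply] at hp
      exact absurd (hp ▸ hu) H.2.2.1
    · rw [Function.iterate_succ_apply, H.2.2.2.2.2.2.1,
        H.chain_out H.1 H.vndesc m (by omega)] at hp
      exact t.mem_desc.2 ⟨H.1, m, by omega, hp⟩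
  · intro h
    obtain ⟨-, hle, hp⟩ := t.desc_spec h
    refine θ.mem_desc.2 ⟨H.wmem, t.depth v - t.depth u + 1, by omega, ?_⟩
    rw [Function.iterate_succ_apply, H.2.2.2.2.2.2.1,
      H.chain_out H.1 H.vndesc _ (by omega)]
    exact hp

end AI

section AI2

variable {t θ : FTree} {v c w : ℕ}

lemma AICtx.height_eq (H : AICtx t θ v c w) {u : ℕ} (hu : u ∈ t.supp) :
    θ.heightAt u = t.heightAt u := by
  have hdc := H.dc
  have hθu : u ∈ θ.supp := H.suppsub hu
  have h1 := θ.heightAt_add hθu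
  have h2 := t.heightAt_add hu
  by_cases huc : u ∈ t.desc c
  · have hdu : θ.depth u = t.depth u + 1 := H.depth_in huc
    have hwno : w ∉ θ.desc u := by
      rw [H.desc_w_iff hu]
      intro hvu
      have := (t.desc_spec hvu).2.1
      have := (t.desc_spec huc).2.1
      omega
    have hsup : (θ.desc u).sup (fun y => θ.depth y) =
        (t.desc u).sup (fun y => t.depth y) + 1 := by
      apply le_antisymm
      · apply Finset.sup_le
        intro x hx
        have hxs : x ∈ θ.supp := θ.desc_subset_supp hx
        rw [H.2.2.2.2.1] at hxs
        rcases Finset.mem_insert.1 hxs with e | hxt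
        · exact absurd (e ▸ hx) hwno
        · have hxu : x ∈ t.desc u := (H.desc_iff hu hxt).1 hx
          have hxc : x ∈ t.desc c := t.desc_trans hxu huc
          rw [H.depth_in hxc]
          have hles : t.depth x ≤ (t.desc u).sup (fun y => t.depth y) :=
            Finset.le_sup (f := fun y => t.depth y) hxu
          omega
      · obtain ⟨z, hz, hze⟩ := Finset.exists_mem_eq_sup (t.desc u)
          ⟨u, t.desc_self hu⟩ (fun y => t.depth y)
        have hzθ : z ∈ θ.desc u := (H.desc_iff hu (t.desc_subset_supp hz)).2 hz
        have hles : θ.depth z ≤ (θ.desc u).sup (fun y => θ.depth y) :=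
          Finset.le_sup (f := fun y => θ.depth y) hzθ
        rw [H.depth_in (t.desc_trans hz huc)] at hles
        omega
    omega
  · by_cases hcu : c ∈ t.desc u
    · -- u is a proper ancestor of c
      have hcnu : c ≠ u := fun e => huc (e ▸ t.desc_self H.cs)
      have hvu : v ∈ t.desc u := by
        have := t.par_mem_desc hcu hcnu
        rwa [H.cpar] at this
      have hdu : θ.depth u = t.depth u := H.depth_out hu huc
      have hBc := t.heightAt_add H.cs
      have hSv := t.heightAt_add H.1
      have hcond := H.2.2.2.1
      have hSuv : (t.desc v).sup (fun y => t.depth y) ≤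
          (t.desc u).sup (fun y => t.depth y) :=
        Finset.sup_mono (fun x hx => t.desc_trans hx hvu)
      have hsup : (θ.desc u).sup (fun y => θ.depth y) =
          (t.desc u).sup (fun y => t.depth y) := by
        apply le_antisymm
        · apply Finset.sup_le
          intro x hx
          have hxs : x ∈ θ.supp := θ.desc_subset_supp hx
          rw [H.2.2.2.2.1] at hxs
          rcases Finset.mem_insert.1 hxs with e | hxt
          · subst e
            rw [H.depth_w]
            omega
          · have hxu : x ∈ t.desc u := (H.desc_iff hu hxt).1 hx
            by_cases hxc : x ∈ t.desc c
            · rw [H.depth_in hxc]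
              have hles : t.depth x ≤ (t.desc c).sup (fun y => t.depth y) :=
                Finset.le_sup (f := fun y => t.depth y) hxc
              omega
            · rw [H.depth_out hxt hxc]
              exact Finset.le_sup (f := fun y => t.depth y) hxu
        · obtain ⟨z, hz, hze⟩ := Finset.exists_mem_eq_sup (t.desc u)
            ⟨u, t.desc_self hu⟩ (fun y => t.depth y)
          have hzc : z ∉ t.desc c := by
            intro hzc
            have hles : t.depth z ≤ (t.desc c).sup (fun y => t.depth y) :=
              Finset.le_sup (f := fun y => t.depth y) hzc
            omega
          have hzθ : z ∈ θ.desc u := (H.desc_iff hu (t.desc_subset_supp hz)).2 hz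
          have hles : θ.depth z ≤ (θ.desc u).sup (fun y => θ.depth y) :=
            Finset.le_sup (f := fun y => θ.depth y) hzθ
          rw [H.depth_out (t.desc_subset_supp hz) hzc] at hles
          omega
      omega
    · -- u unrelated to c
      have hvu : v ∉ t.desc u := fun h => hcu (t.desc_trans H.cdescv h)
      have hdu : θ.depth u = t.depth u := H.depth_out hu huc
      have hwno : w ∉ θ.desc u := by rw [H.desc_w_iff hu]; exact hvu
      have hsup : (θ.desc u).sup (fun y => θ.depth y) =
          (t.desc u).sup (fun y => t.depth y) := by
        apply le_antisymm
        · apply Finset.sup_le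
          intro x hx
          have hxs : x ∈ θ.supp := θ.desc_subset_supp hx
          rw [H.2.2.2.2.1] at hxs
          rcases Finset.mem_insert.1 hxs with e | hxt
          · exact absurd (e ▸ hx) hwno
          · have hxu : x ∈ t.desc u := (H.desc_iff hu hxt).1 hx
            have hxc : x ∉ t.desc c := by
              intro hxc
              rcases t.desc_comparable hxu hxc with h | h
              · exact hcu h
              · exact huc h
            rw [H.depth_out hxt hxc]
            exact Finset.le_sup (f := fun y => t.depth y) hxu
        · obtain ⟨z, hz, hze⟩ := Finset.exists_mem_eq_sup (t.desc u)
            ⟨u, t.desc_self hu⟩ (fun y => t.depth y)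
          have hzc : z ∉ t.desc c := by
            intro hzc
            rcases t.desc_comparable hz hzc with h | h
            · exact hcu h
            · exact huc h
          have hzθ : z ∈ θ.desc u := (H.desc_iff hu (t.desc_subset_supp hz)).2 hz
          have hles : θ.depth z ≤ (θ.desc u).sup (fun y => θ.depth y) :=
            Finset.le_sup (f := fun y => θ.depth y) hzθ
          rw [H.depth_out (t.desc_subset_supp hz) hzc] at hles
          omega
      omega

lemma AICtx.gam_ge (H : AICtx t θ v c w) {u : ℕ} (hu : u ∈ t.supp)
    (hpos : 1 ≤ t.heightAt u) :
    t.gam u (t.heightAt u - 1) ≤ θ.gam u (t.heightAt u - 1) := by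
  simp only [gam]
  apply Finset.card_le_card
  intro x hx
  simp only [Finset.mem_filter] at hx ⊢
  obtain ⟨hxc, hxh⟩ := hx
  obtain ⟨hxs, hxp, hxr⟩ := t.mem_children.1 hxc
  have hxnec : x ≠ c := by
    intro e
    subst e
    rw [H.cpar] at hxp
    subst hxp
    have := H.2.2.2.1
    omega
  refine ⟨θ.mem_children.2 ⟨H.suppsub hxs, ?_, ?_⟩, ?_⟩
  · rw [H.2.2.2.2.2.2.2.2 x hxs hxnec, hxp]
  · rw [H.2.2.2.2.2.1]; exact hxr
  · rw [H.height_eq hxs, hxh]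

end AI2

section AS

/-- Context of an AS insertion. -/
def ASCtx (t θ : FTree) (v : ℕ) (s : FTree) : Prop :=
  v ∈ t.supp ∧ Disjoint s.supp t.supp ∧ s.height + 1 ≤ t.heightAt v ∧
    θ.supp = t.supp ∪ s.supp ∧ θ.root = t.root ∧ θ.par s.root = v ∧
    (∀ x ∈ t.supp, θ.par x = t.par x) ∧ (∀ x ∈ s.supp, x ≠ s.root → θ.par x = s.par x)

variable {t θ s : FTree} {v : ℕ}

lemma ASCtx.suppsub (H : ASCtx t θ v s) {x : ℕ} (hx : x ∈ t.supp) : x ∈ θ.supp := by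
  rw [H.2.2.2.1]; exact Finset.mem_union_left _ hx

lemma ASCtx.ssuppsub (H : ASCtx t θ v s) {x : ℕ} (hx : x ∈ s.supp) : x ∈ θ.supp := by
  rw [H.2.2.2.1]; exact Finset.mem_union_right _ hx

lemma ASCtx.chain_t (H : ASCtx t θ v s) {x : ℕ} (hx : x ∈ t.supp) (n : ℕ) :
    θ.par^[n] x = t.par^[n] x := by
  induction n with
  | zero => simp
  | succ n ih =>
    rw [Function.iterate_succ_apply', Function.iterate_succ_apply', ih]
    exact H.2.2.2.2.2.2.1 _ (t.iter_mem hx n)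

lemma ASCtx.depth_t (H : ASCtx t θ v s) {x : ℕ} (hx : x ∈ t.supp) :
    θ.depth x = t.depth x := by
  refine θ.depth_eq (H.suppsub hx) ?_ ?_
  · rw [H.chain_t hx, H.2.2.2.2.1]; exact t.depth_spec hx
  · intro n hn
    rw [H.chain_t hx, H.2.2.2.2.1]; exact t.depth_min hx hn

lemma ASCtx.chain_s (H : ASCtx t θ v s) {y : ℕ} (hy : y ∈ s.supp) :
    ∀ n ≤ s.depth y, θ.par^[n] y = s.par^[n] y := by
  intro n hn
  induction n with
  | zero => simp
  | succ n ih =>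
    rw [Function.iterate_succ_apply', Function.iterate_succ_apply', ih (by omega)]
    exact H.2.2.2.2.2.2.2 _ (s.iter_mem hy n) (s.depth_min hy (by omega))

lemma ASCtx.chain_s_tail (H : ASCtx t θ v s) {y : ℕ} (hy : y ∈ s.supp) :
    ∀ m ≤ t.depth v, θ.par^[s.depth y + 1 + m] y = t.par^[m] v := by
  intro m hm
  have e : s.depth y + 1 + m = m + 1 + s.depth y := by omega
  rw [e, Function.iterate_add_apply, H.chain_s hy _ le_rfl, s.depth_spec hy,
    Function.iterate_succ_apply, H.2.2.2.2.2.1]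
  exact H.chain_t H.1 m

lemma ASCtx.root_disj (H : ASCtx t θ v s) {x : ℕ} (hx : x ∈ s.supp) : x ≠ t.root :=
  fun e => (Finset.disjoint_left.1 H.2.1) hx (e ▸ t.root_mem)

lemma ASCtx.depth_s (H : ASCtx t θ v s) {y : ℕ} (hy : y ∈ s.supp) :
    θ.depth y = s.depth y + 1 + t.depth v := by
  refine θ.depth_eq (H.ssuppsub hy) ?_ ?_
  · rw [H.chain_s_tail hy _ le_rfl, H.2.2.2.2.1]
    exact t.depth_spec H.1
  · intro n hn
    rcases le_or_gt n (s.depth y) with h | h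
    · rw [H.chain_s hy _ h, H.2.2.2.2.1]
      exact H.root_disj (s.iter_mem hy n)
    · have e : n = s.depth y + 1 + (n - s.depth y - 1) := by omega
      rw [e, H.chain_s_tail hy _ (by omega), H.2.2.2.2.1]
      exact t.depth_min H.1 (by omega)

lemma ASCtx.desc_t_iff (H : ASCtx t θ v s) {u x : ℕ} (hu : u ∈ t.supp) (hx : x ∈ t.supp) :
    x ∈ θ.desc u ↔ x ∈ t.desc u := by
  constructor
  · intro h
    obtain ⟨-, n, hn, hp⟩ := θ.mem_desc.1 h
    rw [H.chain_t hx] at hp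
    rw [H.depth_t hx] at hn
    exact t.mem_desc.2 ⟨hx, n, hn, hp⟩
  · intro h
    obtain ⟨-, n, hn, hp⟩ := t.mem_desc.1 h
    refine θ.mem_desc.2 ⟨H.suppsub hx, n, ?_, ?_⟩
    · rw [H.depth_t hx]; exact hn
    · rw [H.chain_t hx]; exact hp

lemma ASCtx.desc_s_iff (H : ASCtx t θ v s) {u y : ℕ} (hu : u ∈ t.supp) (hy : y ∈ s.supp) :
    y ∈ θ.desc u ↔ v ∈ t.desc u := by
  have hd := H.depth_s hy
  constructor
  · intro h
    obtain ⟨-, n, hn, hp⟩ := θ.mem_desc.1 h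
    rcases le_or_gt n (s.depth y) with hc | hc
    · rw [H.chain_s hy _ hc] at hp
      exact absurd hu (hp ▸ (Finset.disjoint_left.1 H.2.1) (s.iter_mem hy n))
    · have e : n = s.depth y + 1 + (n - s.depth y - 1) := by omega
      rw [e, H.chain_s_tail hy _ (by omega)] at hp
      exact t.mem_desc.2 ⟨H.1, _, by omega, hp⟩
  · intro h
    obtain ⟨-, hle, hp⟩ := t.desc_spec h
    refine θ.mem_desc.2 ⟨H.ssuppsub hy, s.depth y + 1 + (t.depth v - t.depth u), by omega, ?_⟩
    rw [H.chain_s_tail hy _ (by omega)]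
    exact hp

lemma ASCtx.height_eq (H : ASCtx t θ v s) {u : ℕ} (hu : u ∈ t.supp) :
    θ.heightAt u = t.heightAt u := by
  have hθu : u ∈ θ.supp := H.suppsub hu
  have h1 := θ.heightAt_add hθu
  have h2 := t.heightAt_add hu
  have hdu : θ.depth u = t.depth u := H.depth_t hu
  have hsup : (θ.desc u).sup (fun y => θ.depth y) = (t.desc u).sup (fun y => t.depth y) := by
    apply le_antisymm
    · apply Finset.sup_le
      intro x hx
      have hxs : x ∈ θ.supp := θ.desc_subset_supp hx
      rw [H.2.2.2.1] at hxs
      rcases Finset.mem_union.1 hxs with hxt | hxss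
      · rw [H.depth_t hxt]
        exact Finset.le_sup (f := fun y => t.depth y) ((H.desc_t_iff hu hxt).1 hx)
      · -- x in the attached tree; v must be a descendant of u
        have hvu : v ∈ t.desc u := (H.desc_s_iff hu hxss).1 hx
        rw [H.depth_s hxss]
        have hxh : s.depth x ≤ s.height := s.depth_le_height hxss
        have hcond := H.2.2.1
        have hSv := t.heightAt_add H.1
        have hvz : (t.desc v).sup (fun y => t.depth y) ≤
            (t.desc u).sup (fun y => t.depth y) :=
          Finset.sup_mono (fun z hz => t.desc_trans hz hvu)
        omega
    · obtain ⟨z, hz, hze⟩ := Finset.exists_mem_eq_sup (t.desc u)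
        ⟨u, t.desc_self hu⟩ (fun y => t.depth y)
      have hzθ : z ∈ θ.desc u := (H.desc_t_iff hu (t.desc_subset_supp hz)).2 hz
      have hles : θ.depth z ≤ (θ.desc u).sup (fun y => θ.depth y) :=
        Finset.le_sup (f := fun y => θ.depth y) hzθ
      rw [H.depth_t (t.desc_subset_supp hz)] at hles
      omega
  omega

lemma ASCtx.gam_ge (H : ASCtx t θ v s) {u k : ℕ} (hu : u ∈ t.supp) :
    t.gam u k ≤ θ.gam u k := by
  simp only [gam]
  apply Finset.card_le_card
  intro x hx
  simp only [Finset.mem_filter] at hx ⊢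
  obtain ⟨hxc, hxh⟩ := hx
  obtain ⟨hxs, hxp, hxr⟩ := t.mem_children.1 hxc
  refine ⟨θ.mem_children.2 ⟨H.suppsub hxs, ?_, ?_⟩, ?_⟩
  · rw [H.2.2.2.2.2.2.1 x hxs, hxp]
  · rw [H.2.2.2.2.1]; exact hxr
  · rw [H.height_eq hxs, hxh]

end AS

lemma step_preserves {t θ : FTree} (hstep : t.InsertStep θ) {u : ℕ} (hu : u ∈ t.supp) :
    u ∈ θ.supp ∧ θ.heightAt u = t.heightAt u ∧
      (1 ≤ t.heightAt u →
        t.gam u (t.heightAt u - 1) ≤ θ.gam u (t.heightAt u - 1)) := by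
  rcases hstep with hAI | hAS
  · obtain ⟨v, c, w, H'⟩ := hAI
    have H : AICtx t θ v c w := H'
    exact ⟨H.suppsub hu, H.height_eq hu, fun h => H.gam_ge hu h⟩
  · obtain ⟨v, s, H'⟩ := hAS
    have H : ASCtx t θ v s := H'
    exact ⟨H.suppsub hu, H.height_eq hu, fun _ => H.gam_ge hu⟩

end FTree

/-- Let `θ` be a self-nested tree obtained from `t` by a sequence of
allowed inserting operations AI and AS. Then, for every `1 ≤ h ≤ H(t)`, the (common)
value of the entry `ρ_θ(h, h-1)` of the height profile of `θ` is at least the maximum of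
the components of the vector `ρ_t(h, h-1)`: every component of `ρ_θ(h,h-1)` is at least
every component of `ρ_t(h,h-1)`. -/
theorem nest_profile_lower_bound (t θ : FTree)
    (hreach : Relation.ReflTransGen FTree.InsertStep t θ)
    (hsn : θ.SelfNested) :
    ∀ h, 1 ≤ h → h ≤ t.height →
      ∀ x ∈ θ.profile h (h - 1), ∀ y ∈ t.profile h (h - 1), y ≤ x := by
  intro h h1 _ x hx y hy
  obtain ⟨v0, hv0, hh0, hg0⟩ := FTree.mem_profile.1 hy
  have key : ∀ θ' : FTree, Relation.ReflTransGen FTree.InsertStep t θ' →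
      ∃ u ∈ θ'.supp, θ'.heightAt u = h ∧ y ≤ θ'.gam u (h - 1) := by
    intro θ' hr
    induction hr with
    | refl => exact ⟨v0, hv0, hh0, le_of_eq hg0.symm⟩
    | @tail b c hab hbc ih =>
      obtain ⟨u, hu, hh, hg⟩ := ih
      obtain ⟨hmem, hhe, hge⟩ := FTree.step_preserves hbc hu
      refine ⟨u, hmem, by rw [hhe, hh], ?_⟩
      rw [hh] at hge
      exact le_trans hg (hge h1)
  obtain ⟨u, hu, hhu, hgu⟩ := key θ hreach
  obtain ⟨w0, hw0, hhw0, hgw0⟩ := FTree.mem_profile.1 hx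
  have hiso := hsn u hu w0 hw0 (by rw [hhu, hhw0])
  have := FTree.iso_gam_le hu hw0 hiso (h - 1)
  rw [hgw0] at this
  exact le_trans hgu this
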